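/- (Proposition 4.1, the defining equation of 𝔸¹-curves in the component 𝒜_{pd,d−p}(X).) Let m ≥ 0 and d = m + p. Fix α₁, …, α_m, β₀, β₁, γ₀, γ₁ ∈ 𝕜 and set M = Π_{j=1}^m (t + α_j) (with M = 1 if m = 0), V = β₀ + β₁t, W = γ₀ + γ₁t, and the parameterization x₀(t) = M·V^p, x₁(t) = M·W^p, x₂(t) = M·σ^{1/p}(V,W) − 1. Set b_k = β_k^p, c_k = γ_k^p (k = 0,1), π = b₁c₀ − b₀c₁, and L_k(t) = c_k·x₀(t) − b_k·x₁(t). Then in 𝕜[t] one has L₁(t)^d = (−1)^d · π^p · (σ(x₀(t), x₁(t)) − x₂(t)^p) · Π_{j=1}^m (L₀(t) − α_j^p·L₁(t)). (Hence the image of this 𝔸¹-curve satisfies the equation L₁^d − (−1)^d π^p Δ_X Π_{j=1}^{d−p}(L₀ − a_j^p L₁) = 0 with a_j^p = α_j^p.) -/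

import Mathlib

open Polynomial Finset

/-- **Proposition 4.1, defining equation of the component 𝒜_{pd,d−p}(X).** -/
theorem defining_equation_of_A1_curve
    (p : ℕ) (hp : p.Prime) (𝕜 : Type*) [Field 𝕜] [CharP 𝕜 p]
    (s τ : ℕ → 𝕜) (hτ : ∀ i, τ i ^ p = s i)
    (m : ℕ) (α : Fin m → 𝕜) (β₀ β₁ γ₀ γ₁ : 𝕜)
    (M V W x₀ x₁ x₂ L₀ L₁ : Polynomial 𝕜) (b₀ b₁ c₀ c₁ π : 𝕜)
    (hM : M = ∏ j, (X + C (α j)))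
    (hV : V = C β₀ + C β₁ * X) (hW : W = C γ₀ + C γ₁ * X)
    (hx₀ : x₀ = M * V ^ p) (hx₁ : x₁ = M * W ^ p)
    (hx₂ : x₂ = M * (∑ i ∈ Ioo 0 p, C (τ i) * V ^ i * W ^ (p - i)) - 1)
    (hb₀ : b₀ = β₀ ^ p) (hb₁ : b₁ = β₁ ^ p) (hc₀ : c₀ = γ₀ ^ p) (hc₁ : c₁ = γ₁ ^ p)
    (hπ : π = b₁ * c₀ - b₀ * c₁)
    (hL₀ : L₀ = C c₀ * x₀ - C b₀ * x₁) (hL₁ : L₁ = C c₁ * x₀ - C b₁ * x₁) :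
    L₁ ^ (m + p) =
      C ((-1 : 𝕜) ^ (m + p) * π ^ p) *
        ((∑ i ∈ Ioo 0 p, C (s i) * x₀ ^ i * x₁ ^ (p - i)) - x₂ ^ p) *
        ∏ j, (L₀ - C (α j ^ p) * L₁) := by
  haveI := Fact.mk hp
  -- π is the p-th power of e := β₁γ₀ − β₀γ₁
  set e : 𝕜 := β₁ * γ₀ - β₀ * γ₁ with he
  have hπe : π = e ^ p := by
    rw [hπ, hb₀, hb₁, hc₀, hc₁, he, sub_pow_char, mul_pow, mul_pow]
  -- L₁ = C (-π) * M
  have key1 : C γ₁ * V - C β₁ * W = C (-e) := by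
    rw [hV, hW, he]; push_cast [map_sub, map_neg, map_mul]; ring
  have hL1 : L₁ = C (-π) * M := by
    rw [hL₁, hx₀, hx₁, hc₁, hb₁]
    calc C (γ₁ ^ p) * (M * V ^ p) - C (β₁ ^ p) * (M * W ^ p)
        = M * ((C γ₁ * V) ^ p - (C β₁ * W) ^ p) := by
          rw [mul_pow, mul_pow, ← C_pow, ← C_pow]; ring
      _ = M * (C γ₁ * V - C β₁ * W) ^ p := by rw [sub_pow_char]
      _ = C (-π) * M := by
          rw [key1, ← C_pow, hπe]
          have : (-e) ^ p = -(e ^ p) := by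
            have h := neg_one_pow_char (R := 𝕜) p
            calc (-e) ^ p = (-1 : 𝕜) ^ p * e ^ p := by rw [← neg_one_mul, mul_pow]
              _ = -(e ^ p) := by rw [h]; ring
          rw [this]; ring
  -- L₀ = C π * M * X^p
  have key0 : C γ₀ * V - C β₀ * W = C e * X := by
    rw [hV, hW, he]; push_cast [map_sub, map_mul]; ring
  have hL0 : L₀ = C π * (M * X ^ p) := by
    rw [hL₀, hx₀, hx₁, hc₀, hb₀]
    calc C (γ₀ ^ p) * (M * V ^ p) - C (β₀ ^ p) * (M * W ^ p)
        = M * ((C γ₀ * V) ^ p - (C β₀ * W) ^ p) := by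
          rw [mul_pow, mul_pow, ← C_pow, ← C_pow]; ring
      _ = M * (C γ₀ * V - C β₀ * W) ^ p := by rw [sub_pow_char]
      _ = C π * (M * X ^ p) := by
          rw [key0, mul_pow, ← C_pow, hπe]; ring
  -- the product factor
  have hprod : (∏ j, (L₀ - C (α j ^ p) * L₁)) = C (π ^ m) * M ^ m * M ^ p := by
    have hfac : ∀ j : Fin m, L₀ - C (α j ^ p) * L₁ = C π * M * (X + C (α j)) ^ p := by
      intro j
      rw [hL0, hL1, add_pow_char, ← C_pow, map_neg]; ring
    rw [Finset.prod_congr rfl fun j _ => hfac j, Finset.prod_mul_distrib,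
      Finset.prod_const, Finset.prod_pow, ← hM, Finset.card_univ, Fintype.card_fin,
      mul_pow, ← C_pow]
  -- the boundary factor equals 1
  have hdelta : (∑ i ∈ Ioo 0 p, C (s i) * x₀ ^ i * x₁ ^ (p - i)) - x₂ ^ p = 1 := by
    have hx2p : x₂ ^ p =
        M ^ p * (∑ i ∈ Ioo 0 p, C (s i) * (V ^ p) ^ i * (W ^ p) ^ (p - i)) - 1 := by
      rw [hx₂, sub_pow_char, mul_pow, one_pow, sum_pow_char]
      congr 2
      refine Finset.sum_congr rfl fun i _ => ?_
      rw [mul_pow, mul_pow, ← C_pow, hτ i, ← pow_mul, ← pow_mul, ← pow_mul, ← pow_mul,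
        Nat.mul_comm i p, Nat.mul_comm (p - i) p]
    have hsum : (∑ i ∈ Ioo 0 p, C (s i) * x₀ ^ i * x₁ ^ (p - i)) =
        M ^ p * (∑ i ∈ Ioo 0 p, C (s i) * (V ^ p) ^ i * (W ^ p) ^ (p - i)) := by
      rw [Finset.mul_sum]
      refine Finset.sum_congr rfl fun i hi => ?_
      have hile : i ≤ p := le_of_lt (Finset.mem_Ioo.mp hi).2
      rw [hx₀, hx₁, mul_pow, mul_pow]
      have : M ^ i * M ^ (p - i) = M ^ p := by
        rw [← pow_add, Nat.add_sub_cancel' hile]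
      calc C (s i) * (M ^ i * (V ^ p) ^ i) * (M ^ (p - i) * (W ^ p) ^ (p - i))
          = (M ^ i * M ^ (p - i)) * (C (s i) * (V ^ p) ^ i * (W ^ p) ^ (p - i)) := by ring
        _ = M ^ p * (C (s i) * (V ^ p) ^ i * (W ^ p) ^ (p - i)) := by rw [this]
    rw [hsum, hx2p]; ring
  rw [hdelta, hprod, hL1, mul_pow, mul_one, ← C_pow]
  have hneg : (-π) ^ (m + p) = (-1 : 𝕜) ^ (m + p) * π ^ p * π ^ m := by
    rw [← neg_one_mul, mul_pow, pow_add π m p]; ring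
  rw [hneg]
  push_cast [map_mul]
  ring
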